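/- The elements z_1, …, z_n of H are pairwise commutative: z_i z_j = z_j z_i for all 1 ≤ i, j ≤ n. -/

import Mathlib

/-- `ζ = e^{2πi/r}`. -/
noncomputable def zeta (r : ℕ) : ℂ := Complex.exp (2 * Real.pi * Complex.I / r)

theorem zeta_pow_self {r : ℕ} (hr : 0 < r) : zeta r ^ r = 1 := by
  rw [zeta, ← Complex.exp_nat_mul, mul_comm, div_mul_cancel₀, Complex.exp_two_pi_mul_I]
  exact_mod_cast Nat.cast_ne_zero.mpr hr.ne'

theorem zeta_zpow_root (r : ℕ) (l : ℤ) : (zeta r ^ l) ^ r = 1 := by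
  rcases Nat.eq_zero_or_pos r with h | h
  · rw [h, pow_zero]
  · rw [← zpow_natCast, ← zpow_mul, mul_comm, zpow_mul, zpow_natCast,
      zeta_pow_self h, one_zpow]

/-- The elements of `G(r,1,n)`: `n × n` monomial matrices whose nonzero entries are
`r`-th roots of unity. -/
def IsGMonomial (r n : ℕ) (w : Matrix (Fin n) (Fin n) ℂ) : Prop :=
  ∃ (σ : Equiv.Perm (Fin n)) (a : Fin n → ℂ), (∀ i, a i ^ r = 1) ∧
    ∀ i j, w i j = if i = σ j then a j else 0

theorem IsGMonomial.mul {r n : ℕ} {w v : Matrix (Fin n) (Fin n) ℂ}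
    (hw : IsGMonomial r n w) (hv : IsGMonomial r n v) : IsGMonomial r n (w * v) := by
  obtain ⟨σ, a, ha, hwe⟩ := hw
  obtain ⟨τ, b, hb, hve⟩ := hv
  refine ⟨σ * τ, fun j => a (τ j) * b j, fun j => by rw [mul_pow, ha, hb, one_mul], ?_⟩
  intro i j
  rw [Matrix.mul_apply, Finset.sum_eq_single (τ j)]
  · rw [hwe, hve, if_pos rfl, Equiv.Perm.mul_apply]
    simp [ite_mul]
  · intro k _ hk
    rw [hve, if_neg hk, mul_zero]
  · simp

/-- The diagonal matrix `ζ_i^l`, with `ζ^l` in position `i` and `1`'s elsewhere. -/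
noncomputable def zmat (r n : ℕ) (i : Fin n) (l : ℤ) : Matrix (Fin n) (Fin n) ℂ :=
  Matrix.diagonal (fun a => if a = i then zeta r ^ l else 1)

theorem isGMonomial_zmat (r : ℕ) {n : ℕ} (i : Fin n) (l : ℤ) :
    IsGMonomial r n (zmat r n i l) := by
  refine ⟨1, fun b => if b = i then zeta r ^ l else 1, ?_, ?_⟩
  · intro b
    dsimp only
    split
    · exact zeta_zpow_root r l
    · exact one_pow r
  · intro a b
    rcases eq_or_ne a b with h | h
    · subst h; simp [zmat, Matrix.diagonal_apply]
    · simp [zmat, Matrix.diagonal_apply_ne _ h, Equiv.Perm.one_apply, h]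

/-- The transposition (permutation) matrix `s_{ij}` interchanging coordinates `i` and `j`. -/
def smat {n : ℕ} (i j : Fin n) : Matrix (Fin n) (Fin n) ℂ :=
  Matrix.of fun a b => if a = Equiv.swap i j b then 1 else 0

theorem isGMonomial_smat (r : ℕ) {n : ℕ} (i j : Fin n) : IsGMonomial r n (smat i j) :=
  ⟨Equiv.swap i j, fun _ => 1, fun _ => one_pow r, fun a b => by simp [smat]⟩

/-- The group `G(r,1,n)` of monomial matrices, as a subtype of matrices. -/
def GMon (r n : ℕ) : Type := {w : Matrix (Fin n) (Fin n) ℂ // IsGMonomial r n w}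

/-- `ζ_i^l` as an element of `G(r,1,n)`. -/
noncomputable def zetaW (r : ℕ) {n : ℕ} (i : Fin n) (l : ℤ) : GMon r n :=
  ⟨zmat r n i l, isGMonomial_zmat r i l⟩

/-- `s_{ij}` as an element of `G(r,1,n)`. -/
noncomputable def sW (r : ℕ) {n : ℕ} (i j : Fin n) : GMon r n :=
  ⟨smat i j, isGMonomial_smat r i j⟩

/-- The reflection `ζ_i^l s_{ij} ζ_i^{-l}` as an element of `G(r,1,n)`. -/
noncomputable def reflW (r : ℕ) {n : ℕ} (i j : Fin n) (l : ℤ) : GMon r n :=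
  ⟨zmat r n i l * smat i j * zmat r n i (-l),
    ((isGMonomial_zmat r i l).mul (isGMonomial_smat r i j)).mul (isGMonomial_zmat r i (-l))⟩

/-- The element `ζ_i^l ζ_j^{-l}` of `G(r,1,n)`. -/
noncomputable def pairW (r : ℕ) {n : ℕ} (i j : Fin n) (l : ℤ) : GMon r n :=
  ⟨zmat r n i l * zmat r n j (-l),
    (isGMonomial_zmat r i l).mul (isGMonomial_zmat r j (-l))⟩

/-- Generators of the rational Cherednik algebra of `G(r,1,n)`:
`x_1, …, x_n`, `y_1, …, y_n` and `t_w` for `w ∈ G(r,1,n)`. -/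
inductive CGen (r n : ℕ) where
  | X (i : Fin n) : CGen r n
  | Y (i : Fin n) : CGen r n
  | T (w : GMon r n) : CGen r n

/-- The defining relations of the rational Cherednik algebra of `G(r,1,n)` with
parameters `κ, c₀, c_1, …, c_{r-1}`. -/
inductive CRel (r n : ℕ) (κ c₀ : ℂ) (c : ℕ → ℂ) :
    FreeAlgebra ℂ (CGen r n) → FreeAlgebra ℂ (CGen r n) → Prop
  | t_mul (u w v : GMon r n) : u.1 = w.1 * v.1 → CRel r n κ c₀ c
      (FreeAlgebra.ι ℂ (.T u)) (FreeAlgebra.ι ℂ (.T w) * FreeAlgebra.ι ℂ (.T v))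
  | t_one (u : GMon r n) : u.1 = 1 → CRel r n κ c₀ c (FreeAlgebra.ι ℂ (.T u)) 1
  | t_x (w : GMon r n) (i : Fin n) : CRel r n κ c₀ c
      (FreeAlgebra.ι ℂ (.T w) * FreeAlgebra.ι ℂ (.X i))
      (∑ j, (w.1⁻¹ i j) • (FreeAlgebra.ι ℂ (.X j) * FreeAlgebra.ι ℂ (.T w)))
  | t_y (w : GMon r n) (i : Fin n) : CRel r n κ c₀ c
      (FreeAlgebra.ι ℂ (.T w) * FreeAlgebra.ι ℂ (.Y i))
      (∑ j, (w.1 j i) • (FreeAlgebra.ι ℂ (.Y j) * FreeAlgebra.ι ℂ (.T w)))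
  | xx (i j : Fin n) : CRel r n κ c₀ c
      (FreeAlgebra.ι ℂ (.X i) * FreeAlgebra.ι ℂ (.X j))
      (FreeAlgebra.ι ℂ (.X j) * FreeAlgebra.ι ℂ (.X i))
  | yy (i j : Fin n) : CRel r n κ c₀ c
      (FreeAlgebra.ι ℂ (.Y i) * FreeAlgebra.ι ℂ (.Y j))
      (FreeAlgebra.ι ℂ (.Y j) * FreeAlgebra.ι ℂ (.Y i))
  | yx_ne (i j : Fin n) : i ≠ j → CRel r n κ c₀ c
      (FreeAlgebra.ι ℂ (.Y i) * FreeAlgebra.ι ℂ (.X j))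
      (FreeAlgebra.ι ℂ (.X j) * FreeAlgebra.ι ℂ (.Y i) +
        c₀ • ∑ l ∈ Finset.range r,
          (zeta r ^ (-(l : ℤ))) • FreeAlgebra.ι ℂ (.T (reflW r i j (l : ℤ))))
  | yx_eq (i : Fin n) : CRel r n κ c₀ c
      (FreeAlgebra.ι ℂ (.Y i) * FreeAlgebra.ι ℂ (.X i))
      (FreeAlgebra.ι ℂ (.X i) * FreeAlgebra.ι ℂ (.Y i) + κ • (1 : FreeAlgebra ℂ (CGen r n))
        - ∑ l ∈ Finset.Ico 1 r,
            (c l * (1 - zeta r ^ (-(l : ℤ)))) • FreeAlgebra.ι ℂ (.T (zetaW r i (l : ℤ)))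
        - c₀ • ∑ j ∈ Finset.univ.erase i, ∑ l ∈ Finset.range r,
            FreeAlgebra.ι ℂ (.T (reflW r i j (l : ℤ))))

variable (r n : ℕ) (κ c₀ : ℂ) (c : ℕ → ℂ)

/-- The image of `x_i` in the rational Cherednik algebra of `G(r,1,n)`. -/
noncomputable def cX (i : Fin n) : RingQuot (CRel r n κ c₀ c) :=
  RingQuot.mkAlgHom ℂ (CRel r n κ c₀ c) (FreeAlgebra.ι ℂ (.X i))

/-- The image of `y_i` in the rational Cherednik algebra of `G(r,1,n)`. -/
noncomputable def cY (i : Fin n) : RingQuot (CRel r n κ c₀ c) :=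
  RingQuot.mkAlgHom ℂ (CRel r n κ c₀ c) (FreeAlgebra.ι ℂ (.Y i))

/-- The image of `t_w` in the rational Cherednik algebra of `G(r,1,n)`. -/
noncomputable def cT (w : GMon r n) : RingQuot (CRel r n κ c₀ c) :=
  RingQuot.mkAlgHom ℂ (CRel r n κ c₀ c) (FreeAlgebra.ι ℂ (.T w))

/-- `φ_i = Σ_{j<i} Σ_{l=0}^{r-1} t_{ζ_i^l s_{ij} ζ_i^{-l}}`. -/
noncomputable def cPhi (i : Fin n) : RingQuot (CRel r n κ c₀ c) :=
  ∑ j ∈ Finset.univ.filter (fun j : Fin n => j < i), ∑ l ∈ Finset.range r,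
    cT r n κ c₀ c (reflW r i j (l : ℤ))

/-- The Dunkl–Opdam–Cherednik element `z_i = y_i x_i + c₀ φ_i`. -/
noncomputable def cz (i : Fin n) : RingQuot (CRel r n κ c₀ c) :=
  cY r n κ c₀ c i * cX r n κ c₀ c i + c₀ • cPhi r n κ c₀ c i

/-- `π_i = Σ_{l=0}^{r-1} t_{ζ_i^l ζ_{i+1}^{-l}}` (here with the two indices `i`, `i+1`
passed separately). -/
noncomputable def cPi (i j : Fin n) : RingQuot (CRel r n κ c₀ c) :=
  ∑ l ∈ Finset.range r, cT r n κ c₀ c (pairW r i j (l : ℤ))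

/-- The idempotent `ε_{ij} = (1/r) Σ_{l=0}^{r-1} ζ^{-lj} t_{ζ_i^l}`. -/
noncomputable def cEps (i : Fin n) (j : ℤ) : RingQuot (CRel r n κ c₀ c) :=
  (r : ℂ)⁻¹ • ∑ l ∈ Finset.range r, (zeta r ^ (-(l : ℤ) * j)) • cT r n κ c₀ c (zetaW r i (l : ℤ))

/-- The reparametrised constants `d_j = Σ_{l=1}^{r-1} ζ^{lj} c_l`. -/
noncomputable def dpar (j : ℤ) : ℂ := ∑ l ∈ Finset.Ico 1 r, zeta r ^ ((l : ℤ) * j) * c l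



open Finset in
section
variable {r n : ℕ}

lemma zeta_ne_zero (r : ℕ) : zeta r ≠ 0 := Complex.exp_ne_zero _

/-- monomial matrix in canonical form -/
def mono {n : ℕ} (σ : Equiv.Perm (Fin n)) (a : Fin n → ℂ) : Matrix (Fin n) (Fin n) ℂ :=
  Matrix.of fun x y => if x = σ y then a y else 0

lemma mono_mul (σ τ : Equiv.Perm (Fin n)) (a b : Fin n → ℂ) :
    mono σ a * mono τ b = mono (σ * τ) (fun y => a (τ y) * b y) := by
  ext x y
  rw [Matrix.mul_apply, Finset.sum_eq_single (τ y)]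
  · simp [mono, Equiv.Perm.mul_apply, ite_mul]
    by_cases hx : x = σ (τ y) <;> simp [hx]
  · intro k _ hk
    simp [mono, hk, Ne.symm hk]
  · simp

lemma mono_one : mono (1 : Equiv.Perm (Fin n)) (fun _ => (1:ℂ)) = 1 := by
  ext x y
  simp [mono, Matrix.one_apply, eq_comm]
  by_cases hx : x = y <;> simp [hx]

lemma smat_eq (i j : Fin n) : smat i j = mono (Equiv.swap i j) (fun _ => 1) := by
  ext x y; simp [smat, mono]

lemma zmat_eq (i : Fin n) (l : ℤ) :
    zmat r n i l = mono 1 (fun y => if y = i then zeta r ^ l else 1) := by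
  ext x y
  by_cases h : x = y <;> simp [zmat, mono, Matrix.diagonal_apply, h]

noncomputable def rcoef (r : ℕ) {n : ℕ} (i j : Fin n) (l : ℤ) : Fin n → ℂ :=
  fun y => if y = j then zeta r ^ l else if y = i then zeta r ^ (-l) else 1

lemma refl_eq {i j : Fin n} (h : i ≠ j) (l : ℤ) :
    (reflW r i j l).1 = mono (Equiv.swap i j) (rcoef r i j l) := by
  show zmat r n i l * smat i j * zmat r n i (-l) = _
  ext x y
  rw [zmat, zmat, Matrix.mul_diagonal, Matrix.diagonal_mul]
  rcases eq_or_ne x (Equiv.swap i j y) with rfl | hx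
  · rcases eq_or_ne y i with rfl | hyi
    · simp [mono, smat, rcoef, Equiv.swap_apply_left, h, Ne.symm h]
    · rcases eq_or_ne y j with rfl | hyj
      · simp [mono, smat, rcoef, Equiv.swap_apply_right, hyi, Ne.symm h]
      · simp [mono, smat, rcoef, Equiv.swap_apply_of_ne_of_ne hyi hyj, hyi, hyj]
  · simp [mono, smat, hx]

lemma mono_congr {σ : Equiv.Perm (Fin n)} {a b : Fin n → ℂ} (h : ∀ y, a y = b y) :
    mono σ a = mono σ b := by
  ext x y; simp only [mono, Matrix.of_apply, h y]

lemma swap_aux1 {a b k : Fin n} (hab : a ≠ b) (hak : a ≠ k) (hbk : b ≠ k) :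
    Equiv.swap b k * Equiv.swap a k = Equiv.swap a k * Equiv.swap b a := by
  ext x
  simp only [Equiv.Perm.mul_apply, Equiv.swap_apply_def]
  split_ifs <;> simp_all

lemma swap_aux2 {a b k : Fin n} (hab : a ≠ b) (hak : a ≠ k) (hbk : b ≠ k) :
    Equiv.swap b a * Equiv.swap a k = Equiv.swap a k * Equiv.swap b k := by
  ext x
  simp only [Equiv.Perm.mul_apply, Equiv.swap_apply_def]
  split_ifs <;> simp_all

lemma swap_aux3 {a k b m : Fin n} (h1 : a ≠ b) (h2 : a ≠ m) (h3 : k ≠ b) (h4 : k ≠ m) :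
    Equiv.swap a k * Equiv.swap b m = Equiv.swap b m * Equiv.swap a k := by
  ext x
  simp only [Equiv.Perm.mul_apply, Equiv.swap_apply_def]
  split_ifs <;> simp_all

lemma reflM_G1 {a b k : Fin n} (hab : a ≠ b) (hak : a ≠ k) (hbk : b ≠ k) (p l : ℤ) :
    (reflW r b k p).1 * (reflW r a k l).1 = (reflW r a k l).1 * (reflW r b a (p - l)).1 := by
  rw [refl_eq hbk, refl_eq hak, refl_eq (Ne.symm hab), mono_mul, mono_mul, swap_aux1 hab hak hbk]
  apply mono_congr
  intro y
  have hz := zeta_ne_zero r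
  rcases eq_or_ne y a with rfl | hya
  · simp [rcoef, Equiv.swap_apply_left, hab, hak, hbk, Ne.symm hab, Ne.symm hak, Ne.symm hbk,
      zpow_sub₀ hz, zpow_neg, div_eq_mul_inv, mul_comm]
  · rcases eq_or_ne y k with rfl | hyk
    · simp [rcoef, Equiv.swap_apply_right,
        Equiv.swap_apply_of_ne_of_ne (Ne.symm hbk) (Ne.symm hak),
        hab, hak, hbk, Ne.symm hab, Ne.symm hak, Ne.symm hbk]
    · rcases eq_or_ne y b with rfl | hyb
      · simp [rcoef, Equiv.swap_apply_of_ne_of_ne (Ne.symm hab) hbk,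
          Equiv.swap_apply_right, hab, hak, hbk, Ne.symm hab, Ne.symm hak, Ne.symm hbk, hya, hyk,
          zpow_sub₀ hz, zpow_neg, div_eq_mul_inv, mul_inv]
        field_simp
      · simp [rcoef, Equiv.swap_apply_of_ne_of_ne hya hyk,
          Equiv.swap_apply_of_ne_of_ne hyb hya, hya, hyk, hyb]

lemma reflM_G2 {a b k : Fin n} (hab : a ≠ b) (hak : a ≠ k) (hbk : b ≠ k) (q l : ℤ) :
    (reflW r b a q).1 * (reflW r a k l).1 = (reflW r a k l).1 * (reflW r b k (l + q)).1 := by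
  rw [refl_eq (Ne.symm hab), refl_eq hak, refl_eq hbk, mono_mul, mono_mul, swap_aux2 hab hak hbk]
  apply mono_congr
  intro y
  have hz := zeta_ne_zero r
  rcases eq_or_ne y a with rfl | hya
  · simp [rcoef, Equiv.swap_apply_left, Equiv.swap_apply_of_ne_of_ne hab hak,
      hab, hak, hbk, Ne.symm hab, Ne.symm hak, Ne.symm hbk]
  · rcases eq_or_ne y k with rfl | hyk
    · simp [rcoef, Equiv.swap_apply_right, hab, hak, hbk, Ne.symm hab, Ne.symm hak, Ne.symm hbk,
        zpow_add₀ hz, mul_comm]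
    · rcases eq_or_ne y b with rfl | hyb
      · simp [rcoef, Equiv.swap_apply_of_ne_of_ne hya hyk, Equiv.swap_apply_left,
          hab, hak, hbk, Ne.symm hab, Ne.symm hak, Ne.symm hbk,
          hya, hyk, zpow_add₀ hz, zpow_neg, mul_inv]
        field_simp
      · simp [rcoef, Equiv.swap_apply_of_ne_of_ne hya hyk,
          Equiv.swap_apply_of_ne_of_ne hyb hyk, hya, hyk, hyb]

lemma reflM_G3 {a k b m : Fin n} (hak : a ≠ k) (hbm : b ≠ m)
    (h1 : a ≠ b) (h2 : a ≠ m) (h3 : k ≠ b) (h4 : k ≠ m) (l p : ℤ) :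
    (reflW r a k l).1 * (reflW r b m p).1 = (reflW r b m p).1 * (reflW r a k l).1 := by
  rw [refl_eq hak, refl_eq hbm, mono_mul, mono_mul, swap_aux3 h1 h2 h3 h4]
  apply mono_congr
  intro y
  rcases eq_or_ne y b with rfl | hyb
  · simp [rcoef, Equiv.swap_apply_left, Equiv.swap_apply_of_ne_of_ne (Ne.symm h1) (Ne.symm h3),
      h1, h2, h3, h4, Ne.symm h1, Ne.symm h2, Ne.symm h3, Ne.symm h4]
  · rcases eq_or_ne y m with rfl | hym
    · simp [rcoef, Equiv.swap_apply_right, Equiv.swap_apply_of_ne_of_ne (Ne.symm h2) (Ne.symm h4),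
        h1, h2, h3, h4, Ne.symm h1, Ne.symm h2, Ne.symm h3, Ne.symm h4]
    · rcases eq_or_ne y a with rfl | hya
      · simp [rcoef, Equiv.swap_apply_left, Equiv.swap_apply_of_ne_of_ne hyb hym,
          h1, h2, h3, h4, Ne.symm h1, Ne.symm h2, Ne.symm h3, Ne.symm h4, hyb, hym]
      · rcases eq_or_ne y k with rfl | hyk
        · simp [rcoef, Equiv.swap_apply_right, Equiv.swap_apply_of_ne_of_ne hyb hym,
            h1, h2, h3, h4, Ne.symm h1, Ne.symm h2, Ne.symm h3, Ne.symm h4, hyb, hym]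
        · simp [rcoef, Equiv.swap_apply_of_ne_of_ne hyb hym,
            Equiv.swap_apply_of_ne_of_ne hya hyk, hya, hyk, hyb, hym]

lemma reflM_G4 {i j : Fin n} (h : i ≠ j) (l : ℤ) :
    (reflW r i j l).1 = (reflW r j i (-l)).1 := by
  rw [refl_eq h, refl_eq (Ne.symm h), Equiv.swap_comm]
  apply mono_congr
  intro y
  rcases eq_or_ne y i with rfl | hyi
  · simp [rcoef, h, Ne.symm h]
  · rcases eq_or_ne y j with rfl | hyj
    · simp [rcoef, h, Ne.symm h]
    · simp [rcoef, hyi, hyj]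

lemma reflM_G5 (hr : 0 < r) {i j : Fin n} (h : i ≠ j) (l : ℤ) :
    (reflW r i j (l + r)).1 = (reflW r i j l).1 := by
  rw [refl_eq h, refl_eq h]
  apply mono_congr
  intro y
  have hz := zeta_ne_zero r
  have hpow : zeta r ^ ((r : ℤ)) = 1 := by
    rw [zpow_natCast, zeta_pow_self hr]
  simp only [rcoef, zpow_add₀ hz, neg_add, hpow, mul_one, zpow_neg, inv_one]

lemma reflM_invol {i j : Fin n} (h : i ≠ j) (l : ℤ) :
    (reflW r i j l).1 * (reflW r i j l).1 = 1 := by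
  rw [refl_eq h, mono_mul, Equiv.swap_mul_self]
  rw [mono_congr (b := fun _ => (1:ℂ)) ?_, mono_one]
  intro y
  have hz := zeta_ne_zero r
  rcases eq_or_ne y i with rfl | hyi
  · simp [rcoef, Equiv.swap_apply_left, h, Ne.symm h, zpow_neg, mul_inv_cancel₀ (zpow_ne_zero _ hz)]
  · rcases eq_or_ne y j with rfl | hyj
    · simp [rcoef, Equiv.swap_apply_right, h, Ne.symm h, zpow_neg,
        inv_mul_cancel₀ (zpow_ne_zero _ hz)]
    · simp [rcoef, Equiv.swap_apply_of_ne_of_ne hyi hyj, hyi, hyj]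

lemma reflM_inv {i j : Fin n} (h : i ≠ j) (l : ℤ) :
    (reflW r i j l).1⁻¹ = (reflW r i j l).1 :=
  Matrix.inv_eq_left_inv (reflM_invol h l)

end

noncomputable section quotlayer
open Finset
variable (r n : ℕ) (κ c₀ : ℂ) (c : ℕ → ℂ)

def gmul {r n : ℕ} (u v : GMon r n) : GMon r n := ⟨u.1 * v.1, u.2.mul v.2⟩

local notation "𝕋" => cT r n κ c₀ c
local notation "𝕏" => cX r n κ c₀ c
local notation "𝕐" => cY r n κ c₀ c
local notation "mk" => RingQuot.mkAlgHom ℂ (CRel r n κ c₀ c)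

lemma cT_gmul (u v : GMon r n) : 𝕋 (gmul u v) = 𝕋 u * 𝕋 v := by
  have := RingQuot.mkAlgHom_rel ℂ (CRel.t_mul (κ := κ) (c₀ := c₀) (c := c) (gmul u v) u v rfl)
  simpa [cT, map_mul] using this

lemma hTx (w : GMon r n) (i : Fin n) :
    𝕋 w * 𝕏 i = ∑ j, (w.1⁻¹ i j) • (𝕏 j * 𝕋 w) := by
  have := RingQuot.mkAlgHom_rel ℂ (CRel.t_x (κ := κ) (c₀ := c₀) (c := c) w i)
  simpa [cT, cX, map_mul, map_sum, map_smul] using this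

lemma hTy (w : GMon r n) (i : Fin n) :
    𝕋 w * 𝕐 i = ∑ j, (w.1 j i) • (𝕐 j * 𝕋 w) := by
  have := RingQuot.mkAlgHom_rel ℂ (CRel.t_y (κ := κ) (c₀ := c₀) (c := c) w i)
  simpa [cT, cY, map_mul, map_sum, map_smul] using this

lemma hxx (i j : Fin n) : 𝕏 i * 𝕏 j = 𝕏 j * 𝕏 i := by
  have := RingQuot.mkAlgHom_rel ℂ (CRel.xx (r := r) (n := n) (κ := κ) (c₀ := c₀) (c := c) i j)
  simpa [cX, map_mul] using this

lemma hyy (i j : Fin n) : 𝕐 i * 𝕐 j = 𝕐 j * 𝕐 i := by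
  have := RingQuot.mkAlgHom_rel ℂ (CRel.yy (r := r) (n := n) (κ := κ) (c₀ := c₀) (c := c) i j)
  simpa [cY, map_mul] using this

lemma hyx_ne {i j : Fin n} (h : i ≠ j) :
    𝕐 i * 𝕏 j = 𝕏 j * 𝕐 i +
      c₀ • ∑ l ∈ Finset.range r, (zeta r ^ (-(l : ℤ))) • 𝕋 (reflW r i j (l : ℤ)) := by
  have := RingQuot.mkAlgHom_rel ℂ (CRel.yx_ne (r := r) (n := n) (κ := κ) (c₀ := c₀) (c := c) i j h)
  simpa [cX, cY, cT, map_mul, map_sum, map_smul, map_add] using this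

lemma rcoef_mul_swap {i j : Fin n} (h : i ≠ j) (l : ℤ) (k : Fin n) :
    rcoef r i j l k * rcoef r i j l (Equiv.swap i j k) = 1 := by
  have hz := zeta_ne_zero r
  rcases eq_or_ne k i with rfl | hki
  · simp [rcoef, Equiv.swap_apply_left, h, Ne.symm h, zpow_neg,
      inv_mul_cancel₀ (zpow_ne_zero l hz)]
  · rcases eq_or_ne k j with rfl | hkj
    · simp [rcoef, Equiv.swap_apply_right, h, Ne.symm h, zpow_neg,
        mul_inv_cancel₀ (zpow_ne_zero l hz)]
    · simp [rcoef, Equiv.swap_apply_of_ne_of_ne hki hkj, hki, hkj]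

lemma rTx {i j : Fin n} (h : i ≠ j) (l : ℤ) (k : Fin n) :
    𝕋 (reflW r i j l) * 𝕏 k =
      rcoef r i j l (Equiv.swap i j k) • (𝕏 (Equiv.swap i j k) * 𝕋 (reflW r i j l)) := by
  rw [hTx, Finset.sum_eq_single (Equiv.swap i j k)]
  · rw [reflM_inv h, refl_eq h]
    simp [mono]
  · intro b _ hb
    rw [reflM_inv h, refl_eq h]
    have : k ≠ Equiv.swap i j b := by
      intro hk
      exact hb (by rw [hk, Equiv.swap_apply_self])
    simp [mono, this]
  · intro hmem
    exact absurd (Finset.mem_univ _) hmem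

lemma rTy {i j : Fin n} (h : i ≠ j) (l : ℤ) (k : Fin n) :
    𝕋 (reflW r i j l) * 𝕐 k =
      rcoef r i j l k • (𝕐 (Equiv.swap i j k) * 𝕋 (reflW r i j l)) := by
  rw [hTy, Finset.sum_eq_single (Equiv.swap i j k)]
  · rw [refl_eq h]
    simp [mono]
  · intro b _ hb
    rw [refl_eq h]
    have : b ≠ Equiv.swap i j k := hb
    simp [mono, this]
  · intro hmem
    exact absurd (Finset.mem_univ _) hmem

lemma rTP {i j : Fin n} (h : i ≠ j) (l : ℤ) (k : Fin n) :
    𝕋 (reflW r i j l) * (𝕐 k * 𝕏 k) =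
      𝕐 (Equiv.swap i j k) * 𝕏 (Equiv.swap i j k) * 𝕋 (reflW r i j l) := by
  rw [← mul_assoc, rTy r n κ c₀ c h l k, smul_mul_assoc, mul_assoc,
    rTx r n κ c₀ c h l k, mul_smul_comm, smul_smul, rcoef_mul_swap r n h l k, one_smul,
    mul_assoc]

end quotlayer

section sumlemmas
open Finset
variable {A : Type*} [AddCommGroup A]

lemma sum_shift_one (r : ℕ) (f : ℤ → A) (hf : f r = f 0) :
    ∑ p ∈ range r, f ((p : ℤ) + 1) = ∑ p ∈ range r, f p := by
  have h1 : ∑ p ∈ range (r + 1), f (p : ℤ) = ∑ p ∈ range r, f ((p : ℤ) + 1) + f 0 := by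
    rw [Finset.sum_range_succ']
    push_cast
    rfl
  have h2 : ∑ p ∈ range (r + 1), f (p : ℤ) = ∑ p ∈ range r, f (p : ℤ) + f (r : ℤ) :=
    Finset.sum_range_succ _ _
  have := h1.symm.trans h2
  rw [hf] at this
  exact add_right_cancel this

lemma sum_shift (r : ℕ) (f : ℤ → A) (hf : ∀ q, f (q + r) = f q) (m : ℤ) :
    ∑ p ∈ range r, f ((p : ℤ) + m) = ∑ p ∈ range r, f p := by
  induction m using Int.induction_on with
  | zero => simp
  | succ m ih =>
      have key := sum_shift_one r (fun q => f (q + m)) (by rw [show (r:ℤ) + (m:ℤ) = (m:ℤ) + r by ring, hf, zero_add])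
      calc ∑ p ∈ range r, f ((p : ℤ) + (m + 1))
          = ∑ p ∈ range r, f (((p : ℤ) + 1) + m) := by
            apply Finset.sum_congr rfl; intro p _; congr 1; ring
        _ = ∑ p ∈ range r, f ((p : ℤ) + m) := key
        _ = ∑ p ∈ range r, f p := ih
  | pred m ih =>
      have key := sum_shift_one r (fun q => f (q + (-(m : ℤ) - 1)))
        (by rw [show (r : ℤ) + (-(m:ℤ) - 1) = (-(m:ℤ)-1) + r by ring, hf, zero_add])
      calc ∑ p ∈ range r, f ((p : ℤ) + (-(m : ℤ) - 1))
          = ∑ p ∈ range r, f p := by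
            rw [← ih, ← key]
            apply Finset.sum_congr rfl; intro p _; congr 1; ring

lemma sum_neg (r : ℕ) (f : ℤ → A) (hf : ∀ q, f (q + r) = f q) :
    ∑ p ∈ range r, f (-(p : ℤ)) = ∑ p ∈ range r, f p := by
  calc ∑ p ∈ range r, f (-(p : ℤ))
      = ∑ p ∈ range r, f ((r : ℤ) - p) := by
        apply Finset.sum_congr rfl; intro p _
        rw [← hf (-(p:ℤ))]
        congr 1
        ring
    _ = ∑ p ∈ range r, f ((p : ℤ) + 1) := by
        rw [← Finset.sum_range_reflect (fun j => f ((j : ℤ) + 1)) r]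
        apply Finset.sum_congr rfl; intro p hp
        have hpr := Finset.mem_range.1 hp
        show f ((r : ℤ) - p) = f (((r - 1 - p : ℕ) : ℤ) + 1)
        congr 1
        omega
    _ = ∑ p ∈ range r, f p := sum_shift_one r f (by rw [← hf 0, zero_add])

end sumlemmas

noncomputable section quotlayer2
open Finset
variable (r n : ℕ) (κ c₀ : ℂ) (c : ℕ → ℂ)

local notation "𝕋" => cT r n κ c₀ c
local notation "𝕏" => cX r n κ c₀ c
local notation "𝕐" => cY r n κ c₀ c

/-- `S_{ab} = Σ_l t_{ζ_a^l s_{ab} ζ_a^{-l}}`. -/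
def cS (a b : Fin n) : RingQuot (CRel r n κ c₀ c) :=
  ∑ l ∈ Finset.range r, 𝕋 (reflW r a b (l : ℤ))

lemma reflW_period (hr : 0 < r) {a b : Fin n} (h : a ≠ b) (q : ℤ) :
    reflW r a b (q + r) = reflW r a b q :=
  Subtype.ext (reflM_G5 hr h q)

lemma hS_symm (hr : 0 < r) {a b : Fin n} (h : a ≠ b) :
    cS r n κ c₀ c a b = cS r n κ c₀ c b a := by
  unfold cS
  have step : ∀ l : ℤ, reflW r b a l = reflW r a b (-l) :=
    fun l => Subtype.ext (reflM_G4 (Ne.symm h) l)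
  calc ∑ l ∈ Finset.range r, 𝕋 (reflW r a b (l : ℤ))
      = ∑ l ∈ Finset.range r, 𝕋 (reflW r a b (-(l : ℤ))) := by
        rw [sum_neg (A := RingQuot (CRel r n κ c₀ c)) r
          (fun q => 𝕋 (reflW r a b q)) (fun q => by show 𝕋 (reflW r a b (q + r)) = 𝕋 (reflW r a b q); rw [reflW_period r n hr h q])]
    _ = ∑ l ∈ Finset.range r, 𝕋 (reflW r b a (l : ℤ)) := by
        apply Finset.sum_congr rfl; intro l _; rw [step]

lemma hS_P {a b : Fin n} (h : a ≠ b) (k : Fin n) :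
    cS r n κ c₀ c a b * (𝕐 k * 𝕏 k) =
      𝕐 (Equiv.swap a b k) * 𝕏 (Equiv.swap a b k) * cS r n κ c₀ c a b := by
  unfold cS
  rw [Finset.sum_mul, Finset.mul_sum]
  apply Finset.sum_congr rfl
  intro l _
  rw [rTP r n κ c₀ c h (l : ℤ) k, mul_assoc]

lemma hSS1 (hr : 0 < r) {a b k : Fin n} (hab : a ≠ b) (hak : a ≠ k) (hbk : b ≠ k) :
    cS r n κ c₀ c b k * cS r n κ c₀ c a k = cS r n κ c₀ c a k * cS r n κ c₀ c b a := by
  unfold cS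
  rw [Finset.sum_mul, Finset.sum_mul]
  simp only [Finset.mul_sum]
  rw [Finset.sum_comm]
  apply Finset.sum_congr rfl
  intro l _
  calc ∑ p ∈ Finset.range r, 𝕋 (reflW r b k (p : ℤ)) * 𝕋 (reflW r a k (l : ℤ))
      = ∑ p ∈ Finset.range r,
          𝕋 (gmul (reflW r a k (l : ℤ)) (reflW r b a ((p : ℤ) + (-(l : ℤ))))) := by
        apply Finset.sum_congr rfl; intro p _
        rw [← cT_gmul]
        congr 1
        apply Subtype.ext
        show (reflW r b k (p:ℤ)).1 * (reflW r a k (l:ℤ)).1 = _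
        rw [reflM_G1 hab hak hbk (p : ℤ) (l : ℤ)]
        rw [show (p : ℤ) - (l : ℤ) = (p : ℤ) + (-(l:ℤ)) from sub_eq_add_neg _ _]
        rfl
    _ = ∑ p ∈ Finset.range r, 𝕋 (gmul (reflW r a k (l : ℤ)) (reflW r b a (p : ℤ))) := by
        exact sum_shift r (fun q => 𝕋 (gmul (reflW r a k (l : ℤ)) (reflW r b a q)))
          (fun q => by
            show 𝕋 (gmul (reflW r a k (l:ℤ)) (reflW r b a (q + r))) = _
            rw [reflW_period r n hr (Ne.symm hab) q]) (-(l : ℤ))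
    _ = ∑ p ∈ Finset.range r, 𝕋 (reflW r a k (l : ℤ)) * 𝕋 (reflW r b a (p : ℤ)) := by
        apply Finset.sum_congr rfl; intro p _; rw [cT_gmul]

lemma hSS2 (hr : 0 < r) {a b k : Fin n} (hab : a ≠ b) (hak : a ≠ k) (hbk : b ≠ k) :
    cS r n κ c₀ c b a * cS r n κ c₀ c a k = cS r n κ c₀ c a k * cS r n κ c₀ c b k := by
  unfold cS
  rw [Finset.sum_mul, Finset.sum_mul]
  simp only [Finset.mul_sum]
  rw [Finset.sum_comm]
  apply Finset.sum_congr rfl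
  intro l _
  calc ∑ q ∈ Finset.range r, 𝕋 (reflW r b a (q : ℤ)) * 𝕋 (reflW r a k (l : ℤ))
      = ∑ q ∈ Finset.range r,
          𝕋 (gmul (reflW r a k (l : ℤ)) (reflW r b k ((q : ℤ) + (l : ℤ)))) := by
        apply Finset.sum_congr rfl; intro q _
        rw [← cT_gmul]
        congr 1
        apply Subtype.ext
        show (reflW r b a (q:ℤ)).1 * (reflW r a k (l:ℤ)).1 = _
        rw [reflM_G2 hab hak hbk (q : ℤ) (l : ℤ)]
        rw [show (l : ℤ) + (q : ℤ) = (q : ℤ) + (l:ℤ) from add_comm _ _]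
        rfl
    _ = ∑ q ∈ Finset.range r, 𝕋 (gmul (reflW r a k (l : ℤ)) (reflW r b k (q : ℤ))) := by
        exact sum_shift r (fun p => 𝕋 (gmul (reflW r a k (l : ℤ)) (reflW r b k p)))
          (fun p => by
            show 𝕋 (gmul (reflW r a k (l:ℤ)) (reflW r b k (p + r))) = _
            rw [reflW_period r n hr hbk p]) (l : ℤ)
    _ = ∑ q ∈ Finset.range r, 𝕋 (reflW r a k (l : ℤ)) * 𝕋 (reflW r b k (q : ℤ)) := by
        apply Finset.sum_congr rfl; intro q _; rw [cT_gmul]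

lemma hSS3 {a k b m : Fin n} (hak : a ≠ k) (hbm : b ≠ m)
    (h1 : a ≠ b) (h2 : a ≠ m) (h3 : k ≠ b) (h4 : k ≠ m) :
    cS r n κ c₀ c a k * cS r n κ c₀ c b m = cS r n κ c₀ c b m * cS r n κ c₀ c a k := by
  unfold cS
  rw [Finset.sum_mul, Finset.sum_mul]
  simp only [Finset.mul_sum]
  rw [Finset.sum_comm]
  apply Finset.sum_congr rfl
  intro l _
  apply Finset.sum_congr rfl
  intro p _
  rw [← cT_gmul, ← cT_gmul]
  congr 1
  apply Subtype.ext
  exact reflM_G3 hak hbm h1 h2 h3 h4 (p : ℤ) (l : ℤ)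

end quotlayer2

noncomputable section finallayer
open Finset
variable (r n : ℕ) (κ c₀ : ℂ) (c : ℕ → ℂ)

local notation "𝕋" => cT r n κ c₀ c
local notation "𝕏" => cX r n κ c₀ c
local notation "𝕐" => cY r n κ c₀ c

lemma cPhi_eq (i : Fin n) :
    cPhi r n κ c₀ c i = ∑ j ∈ Finset.univ.filter (fun j : Fin n => j < i), cS r n κ c₀ c i j :=
  rfl

lemma hYRX {a b : Fin n} (h : a ≠ b) :
    𝕐 a * ((∑ l ∈ range r, (zeta r ^ (-(l : ℤ))) • 𝕋 (reflW r b a (l : ℤ))) * 𝕏 b) =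
      (𝕐 a * 𝕏 a) * cS r n κ c₀ c b a := by
  have hz := zeta_ne_zero r
  rw [Finset.sum_mul, Finset.mul_sum]
  unfold cS
  rw [Finset.mul_sum]
  apply Finset.sum_congr rfl
  intro l _
  rw [smul_mul_assoc, rTx r n κ c₀ c (Ne.symm h) (l : ℤ) b, Equiv.swap_apply_left]
  have h2 : rcoef r b a (l : ℤ) a = zeta r ^ (l : ℤ) := by simp [rcoef]
  rw [h2, smul_smul, ← zpow_add₀ hz, neg_add_cancel, zpow_zero, one_smul, ← mul_assoc]

lemma hPP {a b : Fin n} (h : a ≠ b) :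
    (𝕐 a * 𝕏 a) * (𝕐 b * 𝕏 b) =
      𝕐 a * 𝕐 b * 𝕏 a * 𝕏 b - c₀ • ((𝕐 a * 𝕏 a) * cS r n κ c₀ c b a) := by
  have hx : 𝕏 a * 𝕐 b = 𝕐 b * 𝕏 a -
      c₀ • (∑ l ∈ range r, (zeta r ^ (-(l : ℤ))) • 𝕋 (reflW r b a (l : ℤ))) := by
    rw [hyx_ne r n κ c₀ c (Ne.symm h), add_sub_cancel_right]
  calc (𝕐 a * 𝕏 a) * (𝕐 b * 𝕏 b)
      = 𝕐 a * ((𝕏 a * 𝕐 b) * 𝕏 b) := by simp only [mul_assoc]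
    _ = 𝕐 a * ((𝕐 b * 𝕏 a) * 𝕏 b) -
        c₀ • (𝕐 a * ((∑ l ∈ range r, (zeta r ^ (-(l : ℤ))) • 𝕋 (reflW r b a (l : ℤ))) * 𝕏 b)) := by
        rw [hx, sub_mul, mul_sub, smul_mul_assoc, mul_smul_comm]
    _ = 𝕐 a * 𝕐 b * 𝕏 a * 𝕏 b - c₀ • ((𝕐 a * 𝕏 a) * cS r n κ c₀ c b a) := by
        rw [hYRX r n κ c₀ c h]
        simp only [mul_assoc]

set_option maxHeartbeats 2000000 in
lemma key (hr : 0 < r) {a b : Fin n} (hab : a < b) :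
    cz r n κ c₀ c a * cz r n κ c₀ c b = cz r n κ c₀ c b * cz r n κ c₀ c a := by
  have hne : a ≠ b := ne_of_lt hab
  have hQ : 𝕐 a * 𝕐 b * 𝕏 a * 𝕏 b = 𝕐 b * 𝕐 a * 𝕏 b * 𝕏 a := by
    rw [hyy r n κ c₀ c a b, mul_assoc (𝕐 b * 𝕐 a) (𝕏 a) (𝕏 b), hxx r n κ c₀ c a b,
      ← mul_assoc]
  have e1 := hPP r n κ c₀ c hne
  have e2 := hPP r n κ c₀ c (Ne.symm hne)
  have h1 : (𝕐 a * 𝕏 a) * (𝕐 b * 𝕏 b) = (𝕐 b * 𝕏 b) * (𝕐 a * 𝕏 a) +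
      c₀ • ((𝕐 b * 𝕏 b) * cS r n κ c₀ c a b) - c₀ • ((𝕐 a * 𝕏 a) * cS r n κ c₀ c b a) := by
    rw [e1, e2, hQ]
    abel
  -- h2 : Pa * Φb = Φb * Pa + (Pa * Sba - Pb * Sba)
  have h2 : (𝕐 a * 𝕏 a) * cPhi r n κ c₀ c b = cPhi r n κ c₀ c b * (𝕐 a * 𝕏 a) +
      ((𝕐 a * 𝕏 a) * cS r n κ c₀ c b a - (𝕐 b * 𝕏 b) * cS r n κ c₀ c b a) := by
    have hsplit : (𝕐 a * 𝕏 a) * cPhi r n κ c₀ c b - cPhi r n κ c₀ c b * (𝕐 a * 𝕏 a) =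
        (𝕐 a * 𝕏 a) * cS r n κ c₀ c b a - (𝕐 b * 𝕏 b) * cS r n κ c₀ c b a := by
      rw [cPhi_eq r n κ c₀ c b, Finset.mul_sum, Finset.sum_mul, ← Finset.sum_sub_distrib]
      have hsub : ({a} : Finset (Fin n)) ⊆ Finset.univ.filter (fun j : Fin n => j < b) := by
        simp [Finset.singleton_subset_iff, hab]
      have hzero : ∀ m ∈ Finset.univ.filter (fun j : Fin n => j < b),
          m ∉ ({a} : Finset (Fin n)) →
          (𝕐 a * 𝕏 a) * cS r n κ c₀ c b m - cS r n κ c₀ c b m * (𝕐 a * 𝕏 a) = 0 := by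
        intro m hm hma
        have hma' : m ≠ a := by simpa using hma
        have hmb : b ≠ m := (Finset.mem_filter.1 hm).2.ne'
        have hswap := hS_P r n κ c₀ c hmb a
        rw [Equiv.swap_apply_of_ne_of_ne hne (Ne.symm hma')] at hswap
        rw [hswap, sub_self]
      rw [← Finset.sum_subset hsub hzero, Finset.sum_singleton]
      have hswap := hS_P r n κ c₀ c (Ne.symm hne) a
      rw [Equiv.swap_apply_right] at hswap
      rw [hswap]
    have := eq_add_of_sub_eq hsplit
    linear_combination (norm := abel) this
  have h3 : cPhi r n κ c₀ c a * (𝕐 b * 𝕏 b) = (𝕐 b * 𝕏 b) * cPhi r n κ c₀ c a := by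
    rw [cPhi_eq r n κ c₀ c a, Finset.sum_mul, Finset.mul_sum]
    apply Finset.sum_congr rfl
    intro k hk
    have hka : k < a := (Finset.mem_filter.1 hk).2
    have hak : a ≠ k := hka.ne'
    have hswap := hS_P r n κ c₀ c hak b
    rw [Equiv.swap_apply_of_ne_of_ne (Ne.symm hne) (hka.trans hab).ne'] at hswap
    exact hswap
  have h4 : cPhi r n κ c₀ c a * cPhi r n κ c₀ c b = cPhi r n κ c₀ c b * cPhi r n κ c₀ c a := by
    rw [cPhi_eq r n κ c₀ c a, cPhi_eq r n κ c₀ c b, Finset.sum_mul, Finset.sum_mul]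
    simp only [Finset.mul_sum]
    conv_rhs => rw [Finset.sum_comm]
    apply Finset.sum_congr rfl
    intro k hk
    have hka : k < a := (Finset.mem_filter.1 hk).2
    have hak : a ≠ k := hka.ne'
    have hkb : k < b := hka.trans hab
    have inner : ∑ m ∈ Finset.univ.filter (fun j : Fin n => j < b),
        (cS r n κ c₀ c a k * cS r n κ c₀ c b m - cS r n κ c₀ c b m * cS r n κ c₀ c a k) = 0 := by
      have hsub : ({k, a} : Finset (Fin n)) ⊆ Finset.univ.filter (fun j : Fin n => j < b) := by
        intro x hx
        simp only [Finset.mem_insert, Finset.mem_singleton] at hx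
        rcases hx with rfl | rfl <;> simp [hkb, hab]
      have hzero : ∀ m ∈ Finset.univ.filter (fun j : Fin n => j < b),
          m ∉ ({k, a} : Finset (Fin n)) →
          cS r n κ c₀ c a k * cS r n κ c₀ c b m - cS r n κ c₀ c b m * cS r n κ c₀ c a k = 0 := by
        intro m hm hmka
        simp only [Finset.mem_insert, Finset.mem_singleton, not_or] at hmka
        have hbm : b ≠ m := (Finset.mem_filter.1 hm).2.ne'
        rw [hSS3 r n κ c₀ c hak hbm hne (Ne.symm hmka.2) hkb.ne (Ne.symm hmka.1), sub_self]
      rw [← Finset.sum_subset hsub hzero, Finset.sum_pair (Ne.symm hak)]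
      have e1 := hSS1 r n κ c₀ c hr hne hak hkb.ne'
      have e2 := hSS2 r n κ c₀ c hr hne hak hkb.ne'
      rw [e1, e2]
      abel
    rw [← sub_eq_zero, ← Finset.sum_sub_distrib]
    exact inner
  show (𝕐 a * 𝕏 a + c₀ • cPhi r n κ c₀ c a) * (𝕐 b * 𝕏 b + c₀ • cPhi r n κ c₀ c b) =
    (𝕐 b * 𝕏 b + c₀ • cPhi r n κ c₀ c b) * (𝕐 a * 𝕏 a + c₀ • cPhi r n κ c₀ c a)
  have expand : ∀ P Q F G : RingQuot (CRel r n κ c₀ c),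
      (P + c₀ • F) * (Q + c₀ • G) =
        P * Q + c₀ • (P * G) + c₀ • (F * Q) + c₀ • (c₀ • (F * G)) := by
    intro P Q F G
    simp only [mul_add, add_mul, mul_smul_comm, smul_mul_assoc, smul_add]
    abel
  rw [expand, expand, h1, h2, h3, h4, hS_symm r n κ c₀ c hr hne]
  simp only [smul_add, smul_sub]
  abel

end finallayer


/-- The elements `z_1, …, z_n` of the rational Cherednik algebra of
`G(r,1,n)` are pairwise commutative. -/
theorem stmt7 (hr : 1 ≤ r) (hn : 2 ≤ n) (i j : Fin n) :
    cz r n κ c₀ c i * cz r n κ c₀ c j = cz r n κ c₀ c j * cz r n κ c₀ c i := by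
  rcases lt_trichotomy i j with h | h | h
  · exact key r n κ c₀ c hr h
  · rw [h]
  · exact (key r n κ c₀ c hr h).symm
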